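/- arXiv:1605.04955 — 3 statements merged into one kernel-verified Lean document; each statement's English description precedes it below -/
import Mathlib

section
/- Let α be a Borel probability measure on ℝ^d and t > 0. Then for every x ∈ ℝ^d, the diffusion Fréchet function at scale t/2 satisfies V_{α,t/2}(x) = 2/C_d(t) - 2∫_{ℝ^d} G_t(x,y) dα(y); that is, it equals 2(4πt)^{-d/2} minus twice the solution at time t of the heat equation ∂_t u = Δu with initial condition α, evaluated at x. -/
open MeasureTheory Real

/-- The Gaussian heat kernel `G_t(x,y) = (4πt)^{-d/2} exp(-‖y-x‖²/(4t))` on `ℝ^d`. -/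
noncomputable def heatKernel (d : ℕ) (t : ℝ) (x y : EuclideanSpace ℝ (Fin d)) : ℝ :=
  ((4 * Real.pi * t) ^ ((d : ℝ) / 2))⁻¹ * Real.exp (-‖y - x‖ ^ 2 / (4 * t))

/-- The squared diffusion distance `d_t²(x₁,x₂) = ‖G_t(x₁,·) - G_t(x₂,·)‖²_{L²}`. -/
noncomputable def diffusionDistSq (d : ℕ) (t : ℝ) (x₁ x₂ : EuclideanSpace ℝ (Fin d)) : ℝ :=
  ∫ y : EuclideanSpace ℝ (Fin d), (heatKernel d t x₁ y - heatKernel d t x₂ y) ^ 2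

-- Gaussian integral on EuclideanSpace
lemma gauss_integral (d : ℕ) {b : ℝ} (hb : 0 < b) :
    ∫ v : EuclideanSpace ℝ (Fin d), Real.exp (-b * ‖v‖ ^ 2) = (Real.pi / b) ^ ((d : ℝ) / 2) := by
  have := GaussianFourier.integral_rexp_neg_mul_sq_norm (V := EuclideanSpace ℝ (Fin d)) hb
  simpa [finrank_euclideanSpace_fin] using this

lemma gauss_integrable (d : ℕ) {b : ℝ} (hb : 0 < b) :
    Integrable (fun v : EuclideanSpace ℝ (Fin d) => Real.exp (-b * ‖v‖ ^ 2)) := by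
  have h := (GaussianFourier.integrable_cexp_neg_mul_sq_norm_add
    (V := EuclideanSpace ℝ (Fin d)) (b := (b : ℂ)) (by simpa using hb) 0 0).norm
  refine h.congr (Filter.Eventually.of_forall fun v => ?_)
  simp only [Complex.norm_exp]
  norm_num
  left
  norm_cast

lemma heatKernel_mul (d : ℕ) {s : ℝ} (hs : 0 < s) (a b z : EuclideanSpace ℝ (Fin d)) :
    heatKernel d s a z * heatKernel d s b z =
      (((4 * Real.pi * s) ^ ((d : ℝ) / 2))⁻¹) ^ 2 * Real.exp (-‖a - b‖ ^ 2 / (8 * s)) *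
        Real.exp (-(1 / (2 * s)) * ‖z - (2 : ℝ)⁻¹ • (a + b)‖ ^ 2) := by
  set w : EuclideanSpace ℝ (Fin d) := z - (2 : ℝ)⁻¹ • (a + b) with hw
  set u : EuclideanSpace ℝ (Fin d) := (2 : ℝ)⁻¹ • (b - a) with hu
  have h1 : z - a = w + u := by rw [hw, hu]; module
  have h2 : z - b = w - u := by rw [hw, hu]; module
  have hun : ‖u‖ ^ 2 = ‖a - b‖ ^ 2 / 4 := by
    rw [hu, norm_smul, norm_sub_rev, mul_pow]; norm_num; ring
  have key : ‖z - a‖ ^ 2 + ‖z - b‖ ^ 2 = 2 * ‖w‖ ^ 2 + ‖a - b‖ ^ 2 / 2 := by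
    rw [h1, h2, norm_add_sq_real w u, norm_sub_sq_real w u, hun]; ring
  have hexp : Real.exp (-‖z - a‖ ^ 2 / (4 * s)) * Real.exp (-‖z - b‖ ^ 2 / (4 * s)) =
      Real.exp (-‖a - b‖ ^ 2 / (8 * s)) * Real.exp (-(1 / (2 * s)) * ‖w‖ ^ 2) := by
    rw [← Real.exp_add, ← Real.exp_add]
    congr 1
    have hs' : s ≠ 0 := ne_of_gt hs
    linear_combination (-1 / (4 * s) : ℝ) * key
  unfold heatKernel
  set c := ((4 * Real.pi * s) ^ ((d : ℝ) / 2))⁻¹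
  calc c * Real.exp (-‖z - a‖ ^ 2 / (4 * s)) * (c * Real.exp (-‖z - b‖ ^ 2 / (4 * s)))
      = c ^ 2 * (Real.exp (-‖z - a‖ ^ 2 / (4 * s)) * Real.exp (-‖z - b‖ ^ 2 / (4 * s))) := by ring
    _ = c ^ 2 * (Real.exp (-‖a - b‖ ^ 2 / (8 * s)) * Real.exp (-(1 / (2 * s)) * ‖w‖ ^ 2)) := by
        rw [hexp]
    _ = _ := by ring

lemma heatKernel_mul_integrable (d : ℕ) {s : ℝ} (hs : 0 < s) (a b : EuclideanSpace ℝ (Fin d)) :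
    Integrable (fun z => heatKernel d s a z * heatKernel d s b z) := by
  simp_rw [heatKernel_mul d hs a b]
  exact (((gauss_integrable d (b := 1 / (2 * s)) (by positivity)).comp_sub_right
    ((2 : ℝ)⁻¹ • (a + b))).const_mul _)

lemma integral_heatKernel_mul (d : ℕ) {s : ℝ} (hs : 0 < s) (a b : EuclideanSpace ℝ (Fin d)) :
    ∫ z, heatKernel d s a z * heatKernel d s b z = heatKernel d (2 * s) a b := by
  simp_rw [heatKernel_mul d hs a b]
  rw [integral_const_mul, integral_sub_right_eq_self
    (fun w : EuclideanSpace ℝ (Fin d) => Real.exp (-(1 / (2 * s)) * ‖w‖ ^ 2))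
    ((2 : ℝ)⁻¹ • (a + b)), gauss_integral d (by positivity)]
  have hpi := Real.pi_pos
  have hc : (((4 * Real.pi * s) ^ ((d : ℝ) / 2))⁻¹) ^ 2 * (Real.pi / (1 / (2 * s))) ^ ((d : ℝ) / 2)
      = ((4 * Real.pi * (2 * s)) ^ ((d : ℝ) / 2))⁻¹ := by
    rw [sq, ← mul_inv, ← Real.mul_rpow (by positivity) (by positivity),
      ← Real.inv_rpow (by positivity), ← Real.mul_rpow (by positivity) (by positivity),
      ← Real.inv_rpow (by positivity)]
    congr 1
    field_simp
    ring
  unfold heatKernel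
  rw [mul_assoc, mul_comm (Real.exp _), ← mul_assoc, hc, norm_sub_rev b a]
  ring_nf

lemma heatKernel_self (d : ℕ) (t : ℝ) (a : EuclideanSpace ℝ (Fin d)) :
    heatKernel d t a a = ((4 * Real.pi * t) ^ ((d : ℝ) / 2))⁻¹ := by
  simp [heatKernel]

lemma diffusionDistSq_eq (d : ℕ) {s : ℝ} (hs : 0 < s) (x₁ x₂ : EuclideanSpace ℝ (Fin d)) :
    diffusionDistSq d s x₁ x₂ =
      2 * ((4 * Real.pi * (2 * s)) ^ ((d : ℝ) / 2))⁻¹ - 2 * heatKernel d (2 * s) x₁ x₂ := by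
  unfold diffusionDistSq
  have hexpand : ∀ z, (heatKernel d s x₁ z - heatKernel d s x₂ z) ^ 2 =
      heatKernel d s x₁ z * heatKernel d s x₁ z + heatKernel d s x₂ z * heatKernel d s x₂ z
        - 2 * (heatKernel d s x₁ z * heatKernel d s x₂ z) := fun z => by ring
  simp_rw [hexpand]
  have h1 : Integrable (fun z => heatKernel d s x₁ z * heatKernel d s x₁ z
      + heatKernel d s x₂ z * heatKernel d s x₂ z) := by
    exact (heatKernel_mul_integrable d hs x₁ x₁).add (heatKernel_mul_integrable d hs x₂ x₂)
  rw [integral_sub h1 ((heatKernel_mul_integrable d hs x₁ x₂).const_mul 2),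
    integral_add (heatKernel_mul_integrable d hs x₁ x₁) (heatKernel_mul_integrable d hs x₂ x₂),
    integral_const_mul, integral_heatKernel_mul d hs, integral_heatKernel_mul d hs,
    integral_heatKernel_mul d hs, heatKernel_self, heatKernel_self]
  ring

/-- For a Borel probability measure `α` on `ℝ^d`, the diffusion Fréchet function at scale `t/2`
satisfies `V_{α,t/2}(x) = 2/C_d(t) - 2 ∫ G_t(x,y) dα(y)`, i.e. it equals `2(4πt)^{-d/2}`
minus twice the solution of the heat equation with initial condition `α`, evaluated at `x`. -/
theorem frechet_function_eq (d : ℕ) (t : ℝ) (ht : 0 < t)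
    (α : Measure (EuclideanSpace ℝ (Fin d))) [IsProbabilityMeasure α]
    (x : EuclideanSpace ℝ (Fin d)) :
    ∫ y, diffusionDistSq d (t / 2) y x ∂α =
      2 * ((4 * Real.pi * t) ^ ((d : ℝ) / 2))⁻¹ - 2 * ∫ y, heatKernel d t x y ∂α := by
  have hs : 0 < t / 2 := by linarith
  have h2s : 2 * (t / 2) = t := by ring
  have hsymm : ∀ y, heatKernel d t y x = heatKernel d t x y := fun y => by
    unfold heatKernel; rw [norm_sub_rev]
  have hpt : ∀ y, diffusionDistSq d (t / 2) y x =
      2 * ((4 * Real.pi * t) ^ ((d : ℝ) / 2))⁻¹ - 2 * heatKernel d t x y := by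
    intro y
    rw [diffusionDistSq_eq d hs y x, h2s, hsymm]
  simp_rw [hpt]
  set c : ℝ := ((4 * Real.pi * t) ^ ((d : ℝ) / 2))⁻¹ with hc
  have hcpos : 0 ≤ c := by positivity
  have hG : Integrable (fun y => heatKernel d t x y) α := by
    have hcont : Continuous (fun y : EuclideanSpace ℝ (Fin d) => heatKernel d t x y) := by
      unfold heatKernel; fun_prop
    refine (integrable_const c).mono' hcont.aestronglyMeasurable ?_
    refine Filter.Eventually.of_forall fun y => ?_
    rw [heatKernel, Real.norm_eq_abs, abs_mul, abs_of_nonneg hcpos,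
      abs_of_nonneg (Real.exp_nonneg _)]
    nth_rewrite 2 [← mul_one c]
    gcongr
    rw [Real.exp_le_one_iff, neg_div]
    exact neg_nonpos.mpr (by positivity)
  rw [integral_sub (integrable_const _) (hG.const_mul 2), integral_const, integral_const_mul,
    probReal_univ]
  simp
end

section
/- (Lipschitz-type bound for squared network diffusion distances) Let Δ be a real symmetric n×n matrix with an orthonormal eigenbasis φ₁,…,φₙ of ℝⁿ, Δφ_k = λ_k φ_k, where λ₁ = 0, λ_k ≥ 0 for all k, and the eigenvector φ₁ is a constant vector. Define d_t(i,j) = ‖e^{-tΔ}e_i - e^{-tΔ}e_j‖. Then for every t > 0 and all indices i, j, ℓ: |d_t²(i,ℓ) - d_t²(j,ℓ)| ≤ 4 √(Tr(e^{-2tΔ}) - 1) · d_t(i,j), where Tr denotes the matrix trace. -/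
open NormedSpace
open Matrix

/-- The matrix heat kernel `e^{-tΔ}` applied to the `i`-th standard basis vector. -/
noncomputable def heatVec {n : ℕ} (Δ : Matrix (Fin n) (Fin n) ℝ) (t : ℝ) (i : Fin n) :
    Fin n → ℝ :=
  (exp (-(t • Δ))).mulVec (Pi.single i 1)

/-- The squared network diffusion distance `d_t²(i,j) = ‖e^{-tΔ}e_i - e^{-tΔ}e_j‖²`
(Euclidean norm on `ℝⁿ`). -/
noncomputable def netDiffSq {n : ℕ} (Δ : Matrix (Fin n) (Fin n) ℝ) (t : ℝ) (i j : Fin n) : ℝ :=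
  ∑ m, (heatVec Δ t i m - heatVec Δ t j m) ^ 2

/-- Cauchy–Schwarz with square roots, for finite sums. -/
lemma cs_sqrt_aux {n : ℕ} (f g : Fin n → ℝ) :
    |∑ m, f m * g m| ≤ Real.sqrt (∑ m, f m ^ 2) * Real.sqrt (∑ m, g m ^ 2) := by
  have h := Finset.sum_mul_sq_le_sq_mul_sq Finset.univ f g
  have h2 := Real.sqrt_le_sqrt h
  rwa [Real.sqrt_sq_eq_abs, Real.sqrt_mul (by positivity)] at h2

/-- Minkowski inequality for finite sums. -/
lemma mink_aux {n : ℕ} (a b : Fin n → ℝ) :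
    Real.sqrt (∑ m, (a m + b m) ^ 2) ≤
      Real.sqrt (∑ m, a m ^ 2) + Real.sqrt (∑ m, b m ^ 2) := by
  have hcs : ∑ m, a m * b m ≤ Real.sqrt (∑ m, a m ^ 2) * Real.sqrt (∑ m, b m ^ 2) :=
    (le_abs_self _).trans (cs_sqrt_aux a b)
  have ha : Real.sqrt (∑ m, a m ^ 2) ^ 2 = ∑ m, a m ^ 2 := Real.sq_sqrt (by positivity)
  have hb : Real.sqrt (∑ m, b m ^ 2) ^ 2 = ∑ m, b m ^ 2 := Real.sq_sqrt (by positivity)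
  have h1 : ∑ m, (a m + b m) ^ 2 ≤
      (Real.sqrt (∑ m, a m ^ 2) + Real.sqrt (∑ m, b m ^ 2)) ^ 2 := by
    have hexp : ∑ m, (a m + b m) ^ 2 = ∑ m, a m ^ 2 + 2 * ∑ m, a m * b m + ∑ m, b m ^ 2 := by
      simp_rw [add_sq, Finset.sum_add_distrib, Finset.mul_sum]
      ring
    rw [hexp, add_sq, ha, hb]
    nlinarith
  calc Real.sqrt (∑ m, (a m + b m) ^ 2)
      ≤ Real.sqrt ((Real.sqrt (∑ m, a m ^ 2) + Real.sqrt (∑ m, b m ^ 2)) ^ 2) :=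
        Real.sqrt_le_sqrt h1
    _ = _ := Real.sqrt_sq (by positivity)

/-- Spectral form of the heat kernel. -/
lemma heat_spec_aux (n : ℕ)
    (Δ : Matrix (Fin n) (Fin n) ℝ)
    (φ : Fin n → Fin n → ℝ) (lam : Fin n → ℝ)
    (horth : ∀ k l, ∑ i, φ k i * φ l i = if k = l then (1 : ℝ) else 0)
    (heig : ∀ k, Δ.mulVec (φ k) = lam k • φ k) (s : ℝ) :
    exp (-(s • Δ)) =
      (Matrix.of φ)ᵀ * Matrix.diagonal (fun k => Real.exp (-(s * lam k))) * Matrix.of φ := by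
  set U : Matrix (Fin n) (Fin n) ℝ := Matrix.of φ with hU
  have hUUT : U * Uᵀ = 1 := by
    ext k l
    simpa [Matrix.mul_apply, Matrix.one_apply, hU] using horth k l
  have hUTU : Uᵀ * U = 1 := mul_eq_one_comm.mp hUUT
  have hunit : IsUnit U := ⟨⟨U, Uᵀ, hUUT, hUTU⟩, rfl⟩
  have hinv : U⁻¹ = Uᵀ := Matrix.inv_eq_right_inv hUUT
  have hΔU : Δ * Uᵀ = Uᵀ * Matrix.diagonal lam := by
    ext a k
    rw [Matrix.mul_diagonal, Matrix.mul_apply]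
    simp only [Matrix.transpose_apply, hU, Matrix.of_apply]
    calc ∑ x, Δ a x * φ k x = (Δ.mulVec (φ k)) a := rfl
      _ = lam k * φ k a := by rw [heig]; simp
      _ = φ k a * lam k := mul_comm _ _
  have hΔeq : Δ = Uᵀ * Matrix.diagonal lam * U := by
    calc Δ = Δ * (Uᵀ * U) := by rw [hUTU, Matrix.mul_one]
    _ = (Δ * Uᵀ) * U := by rw [Matrix.mul_assoc]
    _ = _ := by rw [hΔU]
  have hdiag : Matrix.diagonal (fun k => -(s * lam k)) = -(s • Matrix.diagonal lam) := by
    ext a b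
    rcases eq_or_ne a b with rfl | h
    · simp
    · simp [Matrix.diagonal_apply_ne _ h, h]
  have hsd : -(s • Δ) = Uᵀ * Matrix.diagonal (fun k => -(s * lam k)) * U := by
    rw [hdiag, hΔeq]
    rw [Matrix.mul_neg, Matrix.neg_mul, Matrix.mul_smul, Matrix.smul_mul]
  have hexp : exp (fun k : Fin n => -(s * lam k)) = fun k => Real.exp (-(s * lam k)) := by
    rw [Pi.exp_def]
    funext k
    rw [← Real.exp_eq_exp_ℝ]
  rw [hsd, ← hinv, Matrix.exp_conj' U _ hunit, hinv, Matrix.exp_diagonal, hexp]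

/-- Lipschitz-type bound for squared network diffusion distances: for `Δ` real symmetric with
orthonormal eigenbasis `φ₁,…,φₙ`, `λ₁ = 0`, `λ_k ≥ 0`, and `φ₁` constant,
`|d_t²(i,ℓ) - d_t²(j,ℓ)| ≤ 4 √(Tr(e^{-2tΔ}) - 1) d_t(i,j)`. -/
theorem netDiffSq_lipschitz (n : ℕ) [NeZero n]
    (Δ : Matrix (Fin n) (Fin n) ℝ) (hΔ : Δ.IsSymm)
    (φ : Fin n → Fin n → ℝ) (lam : Fin n → ℝ)
    (horth : ∀ k l, ∑ i, φ k i * φ l i = if k = l then (1 : ℝ) else 0)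
    (heig : ∀ k, Δ.mulVec (φ k) = lam k • φ k)
    (h0 : lam 0 = 0) (hnonneg : ∀ k, 0 ≤ lam k)
    (hconst : ∃ c : ℝ, ∀ i, φ 0 i = c)
    (t : ℝ) (ht : 0 < t) (i j l : Fin n) :
    |netDiffSq Δ t i l - netDiffSq Δ t j l| ≤
      4 * Real.sqrt ((exp (-((2 * t) • Δ))).trace - 1) * Real.sqrt (netDiffSq Δ t i j) := by
  obtain ⟨c, hc⟩ := hconst
  -- column orthonormality
  have hUUT : Matrix.of φ * (Matrix.of φ)ᵀ = 1 := by
    ext k l'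
    simpa [Matrix.mul_apply, Matrix.one_apply] using horth k l'
  have hUTU : (Matrix.of φ)ᵀ * Matrix.of φ = 1 := mul_eq_one_comm.mp hUUT
  have hcol : ∀ a b : Fin n, ∑ k, φ k a * φ k b = if a = b then (1 : ℝ) else 0 := by
    intro a b
    have h := congrFun (congrFun hUTU a) b
    simpa [Matrix.mul_apply, Matrix.one_apply] using h
  -- heat vector components
  have hheat : ∀ (a m : Fin n),
      heatVec Δ t a m = ∑ k, φ k m * (Real.exp (-(t * lam k)) * φ k a) := by
    intro a m
    show ((exp (-(t • Δ))).mulVec (Pi.single a 1)) m = _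
    rw [Matrix.mulVec_single_one, Matrix.col_apply,
      heat_spec_aux n Δ φ lam horth heig t, Matrix.mul_assoc, Matrix.mul_apply]
    apply Finset.sum_congr rfl
    intro k _
    simp [Matrix.diagonal_mul]
  -- trace value
  have htr : (exp (-((2 * t) • Δ))).trace = ∑ k, Real.exp (-(2 * t * lam k)) := by
    rw [heat_spec_aux n Δ φ lam horth heig (2 * t), Matrix.trace_mul_cycle, hUUT,
      Matrix.one_mul, Matrix.trace_diagonal]
  set S : ℝ := (exp (-((2 * t) • Δ))).trace - 1 with hSdef
  have hS : S = ∑ k ∈ Finset.univ.erase 0, Real.exp (-(2 * t * lam k)) := by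
    rw [hSdef, htr, ← Finset.add_sum_erase Finset.univ _ (Finset.mem_univ 0), h0]
    simp
  have hS0 : 0 ≤ S := by
    rw [hS]
    positivity
  -- orthogonal expansion of squared sums
  have key : ∀ cv : Fin n → ℝ, ∑ m, (∑ k, φ k m * cv k) ^ 2 = ∑ k, cv k ^ 2 := by
    intro cv
    calc ∑ m, (∑ k, φ k m * cv k) ^ 2
        = ∑ m, ∑ k, ∑ k', (φ k m * φ k' m) * (cv k * cv k') := by
          apply Finset.sum_congr rfl
          intro m _
          rw [sq, Finset.sum_mul_sum]
          apply Finset.sum_congr rfl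
          intro k _
          apply Finset.sum_congr rfl
          intro k' _
          ring
      _ = ∑ k, ∑ k', (∑ m, φ k m * φ k' m) * (cv k * cv k') := by
          rw [Finset.sum_comm]
          apply Finset.sum_congr rfl
          intro k _
          rw [Finset.sum_comm]
          apply Finset.sum_congr rfl
          intro k' _
          rw [Finset.sum_mul]
      _ = ∑ k, cv k ^ 2 := by
          simp_rw [horth]
          simp [ite_mul, sq]
  -- spectral formula for netDiffSq
  have hnet : ∀ a b : Fin n, netDiffSq Δ t a b =
      ∑ k, (Real.exp (-(t * lam k)) * (φ k a - φ k b)) ^ 2 := by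
    intro a b
    rw [netDiffSq]
    have hdiffm : ∀ m, heatVec Δ t a m - heatVec Δ t b m
        = ∑ k, φ k m * (Real.exp (-(t * lam k)) * (φ k a - φ k b)) := by
      intro m
      rw [hheat, hheat, ← Finset.sum_sub_distrib]
      apply Finset.sum_congr rfl
      intros
      ring
    simp_rw [hdiffm]
    exact key _
  -- entries of eigenvectors are bounded by 1
  have hphile : ∀ (k a : Fin n), φ k a ^ 2 ≤ 1 := by
    intro k a
    have h1 : ∑ k', φ k' a ^ 2 = 1 := by
      have h := hcol a a
      rw [if_pos rfl] at h
      rw [← h]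
      apply Finset.sum_congr rfl
      intros
      ring
    rw [← h1]
    exact Finset.single_le_sum (f := fun k' => φ k' a ^ 2)
      (fun _ _ => sq_nonneg _) (Finset.mem_univ k)
  -- main bound on netDiffSq
  have hbound : ∀ a b : Fin n, netDiffSq Δ t a b ≤ 4 * S := by
    intro a b
    rw [hnet, hS, Finset.mul_sum,
      ← Finset.add_sum_erase Finset.univ _ (Finset.mem_univ 0)]
    have h00 : (Real.exp (-(t * lam 0)) * (φ 0 a - φ 0 b)) ^ 2 = 0 := by
      rw [hc a, hc b]
      simp
    rw [h00, zero_add]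
    apply Finset.sum_le_sum
    intro k _
    have h1 := hphile k a
    have h2 := hphile k b
    have hesq : (Real.exp (-(t * lam k))) ^ 2 = Real.exp (-(2 * t * lam k)) := by
      rw [sq, ← Real.exp_add]
      ring_nf
    calc (Real.exp (-(t * lam k)) * (φ k a - φ k b)) ^ 2
        = Real.exp (-(2 * t * lam k)) * (φ k a - φ k b) ^ 2 := by rw [mul_pow, hesq]
      _ ≤ Real.exp (-(2 * t * lam k)) * 4 := by
          have : (φ k a - φ k b) ^ 2 ≤ 4 := by nlinarith
          have he : 0 ≤ Real.exp (-(2 * t * lam k)) := (Real.exp_pos _).le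
          nlinarith
      _ = 4 * Real.exp (-(2 * t * lam k)) := mul_comm _ _
  have hsqb : ∀ a b : Fin n, Real.sqrt (netDiffSq Δ t a b) ≤ 2 * Real.sqrt S := by
    intro a b
    calc Real.sqrt (netDiffSq Δ t a b) ≤ Real.sqrt (4 * S) := Real.sqrt_le_sqrt (hbound a b)
      _ = 2 * Real.sqrt S := by
          rw [show (4 : ℝ) * S = 2 ^ 2 * S by ring, Real.sqrt_mul (by positivity),
            Real.sqrt_sq (by norm_num)]
  -- the difference identity
  have hdiff : netDiffSq Δ t i l - netDiffSq Δ t j l =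
      ∑ m, (heatVec Δ t i m - heatVec Δ t j m) *
        ((heatVec Δ t i m - heatVec Δ t l m) + (heatVec Δ t j m - heatVec Δ t l m)) := by
    rw [netDiffSq, netDiffSq, ← Finset.sum_sub_distrib]
    apply Finset.sum_congr rfl
    intros
    ring
  have hcsf := cs_sqrt_aux (fun m => heatVec Δ t i m - heatVec Δ t j m)
      (fun m => (heatVec Δ t i m - heatVec Δ t l m) + (heatVec Δ t j m - heatVec Δ t l m))
  have hmk := mink_aux (fun m => heatVec Δ t i m - heatVec Δ t l m)
      (fun m => heatVec Δ t j m - heatVec Δ t l m)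
  have hil : Real.sqrt (∑ m, (heatVec Δ t i m - heatVec Δ t l m) ^ 2) ≤ 2 * Real.sqrt S :=
    hsqb i l
  have hjl : Real.sqrt (∑ m, (heatVec Δ t j m - heatVec Δ t l m) ^ 2) ≤ 2 * Real.sqrt S :=
    hsqb j l
  have hg : Real.sqrt (∑ m, ((heatVec Δ t i m - heatVec Δ t l m)
      + (heatVec Δ t j m - heatVec Δ t l m)) ^ 2) ≤ 4 * Real.sqrt S := by
    calc _ ≤ _ := hmk
      _ ≤ 2 * Real.sqrt S + 2 * Real.sqrt S := add_le_add hil hjl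
      _ = 4 * Real.sqrt S := by ring
  rw [hdiff]
  calc |∑ m, (heatVec Δ t i m - heatVec Δ t j m) *
        ((heatVec Δ t i m - heatVec Δ t l m) + (heatVec Δ t j m - heatVec Δ t l m))|
      ≤ Real.sqrt (∑ m, (heatVec Δ t i m - heatVec Δ t j m) ^ 2) *
        Real.sqrt (∑ m, ((heatVec Δ t i m - heatVec Δ t l m)
          + (heatVec Δ t j m - heatVec Δ t l m)) ^ 2) := hcsf
    _ ≤ Real.sqrt (∑ m, (heatVec Δ t i m - heatVec Δ t j m) ^ 2) * (4 * Real.sqrt S) := by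
        apply mul_le_mul_of_nonneg_left hg (Real.sqrt_nonneg _)
    _ = 4 * Real.sqrt S * Real.sqrt (netDiffSq Δ t i j) := by
        rw [netDiffSq]
        ring
end

section
/- (Stability of diffusion Fréchet vectors) Let Δ be a real symmetric n×n matrix with an orthonormal eigenbasis φ₁,…,φₙ of ℝⁿ, Δφ_k = λ_k φ_k, where λ₁ = 0, λ_k > 0 for k ≥ 2, and φ₁ is a constant vector. Let ξ, ζ ∈ ℝⁿ be probability distributions on the index set {1,…,n} (nonnegative entries summing to 1), and let μ be any coupling of ξ and ζ, i.e., an n×n matrix with nonnegative entries μ_{ij} whose row sums give ξ and column sums give ζ. Define d_t(i,j) = ‖e^{-tΔ}e_i - e^{-tΔ}e_j‖, the commute-time distance d_CT(i,j) = (Σ_{k=2}^n (1/λ_k)(φ_k(i)-φ_k(j))²)^{1/2}, and the diffusion Fréchet vector F_{ξ,t}(i) = Σ_{j=1}^n d_t²(i,j) ξ_j. Then for every t > 0 and every index ℓ: |F_{ξ,t}(ℓ) - F_{ζ,t}(ℓ)| ≤ 4 √((Tr(e^{-2tΔ}) - 1)/(2et)) · Σ_{i,j} d_CT(i,j) μ_{ij}.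 In particular, ‖F_{ξ,t} - F_{ζ,t}‖_∞ ≤ 4 √((Tr(e^{-2tΔ}) - 1)/(2et)) · W₁(ξ,ζ), where W₁ is the 1-Wasserstein distance with respect to the commute-time distance. -/
open NormedSpace

/-- The commute-time distance
`d_CT(i,j) = (Σ_{k≥2} (1/λ_k)(φ_k(i) - φ_k(j))²)^{1/2}`. -/
noncomputable def commuteTimeDist {n : ℕ} [NeZero n] (φ : Fin n → Fin n → ℝ) (lam : Fin n → ℝ)
    (i j : Fin n) : ℝ :=
  Real.sqrt (∑ k ∈ Finset.univ.filter (fun k => k ≠ (0 : Fin n)),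
    (lam k)⁻¹ * (φ k i - φ k j) ^ 2)

/-- The diffusion Fréchet vector `F_{ξ,t}(i) = Σ_j d_t²(i,j) ξ_j`. -/
noncomputable def frechetVec {n : ℕ} (Δ : Matrix (Fin n) (Fin n) ℝ) (t : ℝ) (ξ : Fin n → ℝ)
    (i : Fin n) : ℝ :=
  ∑ j, netDiffSq Δ t i j * ξ j

section Aux
open scoped Matrix

variable {n : ℕ}

private lemma aux_mul_exp_neg_le (y : ℝ) : y * Real.exp (-y) ≤ (Real.exp 1)⁻¹ := by
  have h : y ≤ Real.exp (y - 1) := by nlinarith [Real.add_one_le_exp (y - 1)]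
  have h2 : (0:ℝ) < Real.exp (-y) := Real.exp_pos _
  calc y * Real.exp (-y) ≤ Real.exp (y - 1) * Real.exp (-y) := by nlinarith
    _ = (Real.exp 1)⁻¹ := by
        rw [← Real.exp_add, show y - 1 + -y = -1 by ring, Real.exp_neg]

private lemma aux_exp_smul_eq (Δ : Matrix (Fin n) (Fin n) ℝ)
    (φ : Fin n → Fin n → ℝ) (lam : Fin n → ℝ)
    (horth : ∀ k l, ∑ i, φ k i * φ l i = if k = l then (1 : ℝ) else 0)
    (heig : ∀ k, Δ.mulVec (φ k) = lam k • φ k) (s : ℝ) :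
    exp (-(s • Δ)) =
      (Matrix.of fun i k => φ k i) *
        (Matrix.diagonal fun k => Real.exp (-(s * lam k))) * (Matrix.of fun i k => φ k i)ᵀ := by
  set P : Matrix (Fin n) (Fin n) ℝ := Matrix.of fun i k => φ k i with hP
  have hPtP : Pᵀ * P = 1 := by
    ext k l
    simpa [hP, Matrix.mul_apply, Matrix.one_apply] using horth k l
  have hPPt : P * Pᵀ = 1 := mul_eq_one_comm.mp hPtP
  have hunit : IsUnit P :=
    (Matrix.isUnit_iff_isUnit_det P).mpr
      (Matrix.isUnit_det_of_right_inverse hPPt)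
  have hinv : P⁻¹ = Pᵀ := Matrix.inv_eq_right_inv hPPt
  have hΔP : Δ * P = P * Matrix.diagonal lam := by
    ext i k
    have h1 := congrFun (heig k) i
    simp only [Matrix.mulVec, dotProduct, Pi.smul_apply, smul_eq_mul] at h1
    simp only [hP, Matrix.mul_apply, Matrix.of_apply, Matrix.diagonal_apply, mul_ite, mul_zero,
      Finset.sum_ite_eq', Finset.mem_univ, if_true]
    rw [h1]; ring
  have hΔ : Δ = P * Matrix.diagonal lam * Pᵀ := by
    calc Δ = Δ * (P * Pᵀ) := by rw [hPPt, mul_one]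
      _ = (Δ * P) * Pᵀ := by rw [Matrix.mul_assoc]
      _ = P * Matrix.diagonal lam * Pᵀ := by rw [hΔP]
  have hdiag : -(s • Matrix.diagonal lam) = Matrix.diagonal (fun k => -(s * lam k)) := by
    ext i j
    by_cases h : i = j <;> simp [Matrix.diagonal_apply, h]
  have hdecomp : -(s • Δ) = P * Matrix.diagonal (fun k => -(s * lam k)) * P⁻¹ := by
    rw [hinv, ← hdiag, hΔ]
    rw [Matrix.mul_assoc, Matrix.mul_assoc]
    rw [← Matrix.mul_smul, ← Matrix.mul_neg]
    congr 1
    rw [← Matrix.smul_mul, ← Matrix.neg_mul]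
  have hee : (fun k => exp (-(s * lam k))) = fun k => Real.exp (-(s * lam k)) := by
    funext k
    exact (congrFun Real.exp_eq_exp_ℝ _).symm
  rw [hdecomp, Matrix.exp_conj P _ hunit, Matrix.exp_diagonal, hinv, Pi.exp_def, hee]

private lemma aux_heatVec_apply (Δ : Matrix (Fin n) (Fin n) ℝ)
    (φ : Fin n → Fin n → ℝ) (lam : Fin n → ℝ)
    (horth : ∀ k l, ∑ i, φ k i * φ l i = if k = l then (1 : ℝ) else 0)
    (heig : ∀ k, Δ.mulVec (φ k) = lam k • φ k) (t : ℝ) (i m : Fin n) :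
    heatVec Δ t i m = ∑ k, Real.exp (-(t * lam k)) * (φ k i * φ k m) := by
  rw [heatVec, aux_exp_smul_eq Δ φ lam horth heig t, Matrix.mulVec_single]
  simp only [MulOpposite.op_one, one_smul, Matrix.col_apply]
  rw [Matrix.mul_apply]
  refine Finset.sum_congr rfl fun k _ => ?_
  rw [Matrix.mul_diagonal]
  simp only [Matrix.of_apply, Matrix.transpose_apply]
  ring

private lemma aux_sum_sq_expand (φ : Fin n → Fin n → ℝ)
    (horth : ∀ k l, ∑ i, φ k i * φ l i = if k = l then (1 : ℝ) else 0)
    (c : Fin n → ℝ) :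
    ∑ m, (∑ k, c k * φ k m) ^ 2 = ∑ k, c k ^ 2 := by
  calc ∑ m, (∑ k, c k * φ k m) ^ 2
      = ∑ m, ∑ k, ∑ k', (c k * c k') * (φ k m * φ k' m) := by
        refine Finset.sum_congr rfl fun m _ => ?_
        rw [sq, Finset.sum_mul_sum]
        exact Finset.sum_congr rfl fun k _ =>
          Finset.sum_congr rfl fun k' _ => by ring
    _ = ∑ k, ∑ k', (c k * c k') * (∑ m, φ k m * φ k' m) := by
        rw [Finset.sum_comm]
        refine Finset.sum_congr rfl fun k _ => ?_
        rw [Finset.sum_comm]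
        exact Finset.sum_congr rfl fun k' _ => (Finset.mul_sum _ _ _).symm
    _ = ∑ k, c k ^ 2 := by
        refine Finset.sum_congr rfl fun k _ => ?_
        simp only [horth, mul_ite, mul_one, mul_zero]
        rw [Finset.sum_ite_eq Finset.univ k (fun k' => c k * c k')]
        simp [sq]

private lemma aux_netDiffSq_eq (Δ : Matrix (Fin n) (Fin n) ℝ)
    (φ : Fin n → Fin n → ℝ) (lam : Fin n → ℝ)
    (horth : ∀ k l, ∑ i, φ k i * φ l i = if k = l then (1 : ℝ) else 0)
    (heig : ∀ k, Δ.mulVec (φ k) = lam k • φ k) (t : ℝ) (i j : Fin n) :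
    netDiffSq Δ t i j = ∑ k, Real.exp (-(t * lam k)) ^ 2 * (φ k i - φ k j) ^ 2 := by
  have h1 : ∀ m, heatVec Δ t i m - heatVec Δ t j m
      = ∑ k, (Real.exp (-(t * lam k)) * (φ k i - φ k j)) * φ k m := by
    intro m
    rw [aux_heatVec_apply Δ φ lam horth heig t i m,
      aux_heatVec_apply Δ φ lam horth heig t j m, ← Finset.sum_sub_distrib]
    exact Finset.sum_congr rfl fun k _ => by ring
  rw [netDiffSq]
  simp only [h1]
  rw [aux_sum_sq_expand φ horth]
  exact Finset.sum_congr rfl fun k _ => by ring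

private lemma aux_trace_exp (Δ : Matrix (Fin n) (Fin n) ℝ)
    (φ : Fin n → Fin n → ℝ) (lam : Fin n → ℝ)
    (horth : ∀ k l, ∑ i, φ k i * φ l i = if k = l then (1 : ℝ) else 0)
    (heig : ∀ k, Δ.mulVec (φ k) = lam k • φ k) (s : ℝ) :
    (exp (-(s • Δ))).trace = ∑ k, Real.exp (-(s * lam k)) := by
  rw [aux_exp_smul_eq Δ φ lam horth heig s]
  set P : Matrix (Fin n) (Fin n) ℝ := Matrix.of fun i k => φ k i with hP
  have hPtP : Pᵀ * P = 1 := by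
    ext k l
    simpa [hP, Matrix.mul_apply, Matrix.one_apply] using horth k l
  rw [Matrix.trace_mul_comm, ← Matrix.mul_assoc, hPtP, Matrix.one_mul,
    Matrix.trace_diagonal]

private lemma aux_x_exp_le (t x : ℝ) (ht : 0 < t) :
    x * Real.exp (-(2 * t * x)) ≤ (2 * Real.exp 1 * t)⁻¹ := by
  have h := aux_mul_exp_neg_le (2 * t * x)
  have he : (0:ℝ) < Real.exp 1 := Real.exp_pos 1
  have h2 : Real.exp 1 * ((2 * t * x) * Real.exp (-(2 * t * x)))
      ≤ Real.exp 1 * (Real.exp 1)⁻¹ := mul_le_mul_of_nonneg_left h he.le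
  rw [mul_inv_cancel₀ he.ne'] at h2
  rw [inv_eq_one_div, le_div_iff₀ (by positivity)]
  calc x * Real.exp (-(2 * t * x)) * (2 * Real.exp 1 * t)
      = Real.exp 1 * ((2 * t * x) * Real.exp (-(2 * t * x))) := by ring
    _ ≤ 1 := h2

private lemma aux_lipschitz [NeZero n] (Δ : Matrix (Fin n) (Fin n) ℝ)
    (φ : Fin n → Fin n → ℝ) (lam : Fin n → ℝ)
    (horth : ∀ k l, ∑ i, φ k i * φ l i = if k = l then (1 : ℝ) else 0)
    (heig : ∀ k, Δ.mulVec (φ k) = lam k • φ k)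
    (h0 : lam 0 = 0) (hpos : ∀ k, k ≠ 0 → 0 < lam k)
    (hconst : ∃ c : ℝ, ∀ i, φ 0 i = c)
    (t : ℝ) (ht : 0 < t) (l i j : Fin n) :
    |netDiffSq Δ t l i - netDiffSq Δ t l j| ≤
      4 * Real.sqrt ((∑ k ∈ Finset.univ.filter (fun k => k ≠ (0 : Fin n)),
          Real.exp (-(t * lam k)) ^ 2) / (2 * Real.exp 1 * t)) *
        commuteTimeDist φ lam i j := by
  obtain ⟨c, hc⟩ := hconst
  set S : Finset (Fin n) := Finset.univ.filter (fun k => k ≠ (0 : Fin n)) with hS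
  set E : Fin n → ℝ := fun k => Real.exp (-(t * lam k)) with hE
  set T : ℝ := ∑ k ∈ S, E k ^ 2 with hT
  have hmemS : ∀ k, k ∈ S → k ≠ 0 := by
    intro k hk
    simpa [hS] using hk
  have hE2 : ∀ k, E k ^ 2 = Real.exp (-(2 * t * lam k)) := by
    intro k
    rw [hE, sq, ← Real.exp_add]
    congr 1
    ring
  have hrestrict : ∀ a b : Fin n, netDiffSq Δ t a b
      = ∑ k ∈ S, E k ^ 2 * (φ k a - φ k b) ^ 2 := by
    intro a b
    rw [aux_netDiffSq_eq Δ φ lam horth heig t a b,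
      ← Finset.sum_filter_add_sum_filter_not Finset.univ (fun k => k ≠ (0 : Fin n))]
    have hnot : Finset.univ.filter (fun k => ¬ k ≠ (0 : Fin n)) = {(0 : Fin n)} := by
      ext k; simp
    rw [hnot]
    simp [hc, hS, hE]
  have hφsq : ∀ k m, φ k m ^ 2 ≤ 1 := by
    intro k m
    have h1 := horth k k
    rw [if_pos rfl] at h1
    have h2 : φ k m * φ k m ≤ ∑ x, φ k x * φ k x :=
      Finset.single_le_sum (f := fun i => φ k i * φ k i)
        (fun i _ => mul_self_nonneg _) (Finset.mem_univ m)
    nlinarith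
  have hD4T : ∀ a b : Fin n, (∑ k ∈ S, E k ^ 2 * (φ k a - φ k b) ^ 2) ≤ 4 * T := by
    intro a b
    calc (∑ k ∈ S, E k ^ 2 * (φ k a - φ k b) ^ 2) ≤ ∑ k ∈ S, E k ^ 2 * 4 := by
          refine Finset.sum_le_sum fun k _ => ?_
          have h1 := hφsq k a
          have h2 := hφsq k b
          have h3 : (0:ℝ) ≤ E k ^ 2 := sq_nonneg _
          nlinarith [sq_nonneg (φ k a + φ k b)]
      _ = 4 * T := by rw [hT, ← Finset.sum_mul]; ring
  set u : Fin n → ℝ := fun k => (Real.sqrt (lam k))⁻¹ * (φ k j - φ k i) with hu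
  set v : Fin n → ℝ := fun k =>
    Real.sqrt (lam k) * (E k ^ 2 * ((φ k l - φ k i) + (φ k l - φ k j))) with hv
  have hdiff : netDiffSq Δ t l i - netDiffSq Δ t l j = ∑ k ∈ S, u k * v k := by
    rw [hrestrict l i, hrestrict l j, ← Finset.sum_sub_distrib]
    refine Finset.sum_congr rfl fun k hk => ?_
    have hlk : 0 < lam k := hpos k (hmemS k hk)
    have hs : Real.sqrt (lam k) ≠ 0 := (Real.sqrt_pos.mpr hlk).ne'
    have h1 : (Real.sqrt (lam k))⁻¹ * Real.sqrt (lam k) = 1 := inv_mul_cancel₀ hs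
    calc E k ^ 2 * (φ k l - φ k i) ^ 2 - E k ^ 2 * (φ k l - φ k j) ^ 2
        = ((Real.sqrt (lam k))⁻¹ * Real.sqrt (lam k)) *
            ((φ k j - φ k i) * (E k ^ 2 * ((φ k l - φ k i) + (φ k l - φ k j)))) := by
          rw [h1]; ring
      _ = u k * v k := by rw [hu, hv]; ring
  have hu2 : ∀ k ∈ S, u k ^ 2 = (lam k)⁻¹ * (φ k i - φ k j) ^ 2 := by
    intro k hk
    have hlk : 0 < lam k := hpos k (hmemS k hk)
    rw [hu]
    simp only []
    rw [mul_pow, ← Real.sqrt_inv, Real.sq_sqrt (by positivity)]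
    ring
  have hCnn : 0 ≤ commuteTimeDist φ lam i j := Real.sqrt_nonneg _
  have hsum_u_nn : (0:ℝ) ≤ ∑ k ∈ S, (lam k)⁻¹ * (φ k i - φ k j) ^ 2 := by
    refine Finset.sum_nonneg fun k hk => ?_
    have hlk : 0 < lam k := hpos k (hmemS k hk)
    positivity
  have hsqrtu : Real.sqrt (∑ k ∈ S, u k ^ 2) = commuteTimeDist φ lam i j := by
    unfold commuteTimeDist
    congr 1
    exact Finset.sum_congr rfl hu2
  have hTnn : (0:ℝ) ≤ T := Finset.sum_nonneg fun k _ => sq_nonneg _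
  have hv2 : (∑ k ∈ S, v k ^ 2) ≤ 16 * (T / (2 * Real.exp 1 * t)) := by
    have hstep : ∀ k ∈ S, v k ^ 2 ≤ (2 * Real.exp 1 * t)⁻¹ *
        (E k ^ 2 * ((φ k l - φ k i) + (φ k l - φ k j)) ^ 2) := by
      intro k hk
      have hlk : 0 < lam k := hpos k (hmemS k hk)
      have hle : lam k * E k ^ 2 ≤ (2 * Real.exp 1 * t)⁻¹ := by
        rw [hE2 k]
        exact aux_x_exp_le t (lam k) ht
      have h9 : (0:ℝ) ≤ E k ^ 2 * ((φ k l - φ k i) + (φ k l - φ k j)) ^ 2 := by positivity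
      calc v k ^ 2
          = (lam k * E k ^ 2) * (E k ^ 2 * ((φ k l - φ k i) + (φ k l - φ k j)) ^ 2) := by
            rw [hv]
            simp only []
            rw [mul_pow, Real.sq_sqrt hlk.le]
            ring
        _ ≤ (2 * Real.exp 1 * t)⁻¹ *
            (E k ^ 2 * ((φ k l - φ k i) + (φ k l - φ k j)) ^ 2) :=
            mul_le_mul_of_nonneg_right hle h9
    calc (∑ k ∈ S, v k ^ 2)
        ≤ ∑ k ∈ S, (2 * Real.exp 1 * t)⁻¹ *
            (E k ^ 2 * ((φ k l - φ k i) + (φ k l - φ k j)) ^ 2) :=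
          Finset.sum_le_sum hstep
      _ = (2 * Real.exp 1 * t)⁻¹ *
            ∑ k ∈ S, E k ^ 2 * ((φ k l - φ k i) + (φ k l - φ k j)) ^ 2 := by
          rw [Finset.mul_sum]
      _ ≤ (2 * Real.exp 1 * t)⁻¹ * (16 * T) := by
          refine mul_le_mul_of_nonneg_left ?_ (by positivity)
          calc (∑ k ∈ S, E k ^ 2 * ((φ k l - φ k i) + (φ k l - φ k j)) ^ 2)
              ≤ ∑ k ∈ S, (2 * (E k ^ 2 * (φ k l - φ k i) ^ 2)
                  + 2 * (E k ^ 2 * (φ k l - φ k j) ^ 2)) := by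
                refine Finset.sum_le_sum fun k _ => ?_
                nlinarith [mul_nonneg (sq_nonneg (E k))
                  (sq_nonneg ((φ k l - φ k i) - (φ k l - φ k j)))]
            _ = 2 * (∑ k ∈ S, E k ^ 2 * (φ k l - φ k i) ^ 2)
                  + 2 * (∑ k ∈ S, E k ^ 2 * (φ k l - φ k j) ^ 2) := by
                rw [Finset.sum_add_distrib, ← Finset.mul_sum, ← Finset.mul_sum]
            _ ≤ 16 * T := by
                have ha := hD4T l i
                have hb := hD4T l j
                linarith
      _ = 16 * (T / (2 * Real.exp 1 * t)) := by
          field_simp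
  have habs : |∑ k ∈ S, u k * v k|
      ≤ Real.sqrt (∑ k ∈ S, u k ^ 2) * Real.sqrt (∑ k ∈ S, v k ^ 2) := by
    rw [← Real.sqrt_sq_eq_abs,
      ← Real.sqrt_mul (Finset.sum_nonneg fun k _ => sq_nonneg (u k))]
    exact Real.sqrt_le_sqrt (Finset.sum_mul_sq_le_sq_mul_sq S u v)
  have hsqv : Real.sqrt (∑ k ∈ S, v k ^ 2)
      ≤ 4 * Real.sqrt (T / (2 * Real.exp 1 * t)) := by
    refine le_trans (Real.sqrt_le_sqrt hv2) ?_
    rw [show (16:ℝ) * (T / (2 * Real.exp 1 * t)) = 4 ^ 2 * (T / (2 * Real.exp 1 * t)) by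
      norm_num, Real.sqrt_mul (by norm_num : (0:ℝ) ≤ 4 ^ 2),
      Real.sqrt_sq (by norm_num : (0:ℝ) ≤ 4)]
  rw [hdiff]
  refine habs.trans ?_
  rw [hsqrtu]
  nlinarith [mul_le_mul_of_nonneg_left hsqv hCnn, Real.sqrt_nonneg (∑ k ∈ S, v k ^ 2)]

end Aux

/-- Stability of diffusion Fréchet vectors: for probability distributions `ξ, ζ` on the nodes
and any coupling `μ` of `ξ` and `ζ`,
`|F_{ξ,t}(ℓ) - F_{ζ,t}(ℓ)| ≤ 4 √((Tr(e^{-2tΔ}) - 1)/(2et)) Σ_{i,j} d_CT(i,j) μ_{ij}`;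
in particular `‖F_{ξ,t} - F_{ζ,t}‖_∞ ≤ 4 √((Tr(e^{-2tΔ}) - 1)/(2et)) W₁(ξ,ζ)`. -/
theorem frechetVec_stability (n : ℕ) [NeZero n]
    (Δ : Matrix (Fin n) (Fin n) ℝ) (hΔ : Δ.IsSymm)
    (φ : Fin n → Fin n → ℝ) (lam : Fin n → ℝ)
    (horth : ∀ k l, ∑ i, φ k i * φ l i = if k = l then (1 : ℝ) else 0)
    (heig : ∀ k, Δ.mulVec (φ k) = lam k • φ k)
    (h0 : lam 0 = 0) (hpos : ∀ k, k ≠ 0 → 0 < lam k)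
    (hconst : ∃ c : ℝ, ∀ i, φ 0 i = c)
    (ξ ζ : Fin n → ℝ)
    (hξ : ∀ i, 0 ≤ ξ i) (hξ1 : ∑ i, ξ i = 1)
    (hζ : ∀ i, 0 ≤ ζ i) (hζ1 : ∑ i, ζ i = 1)
    (μ : Matrix (Fin n) (Fin n) ℝ) (hμ : ∀ i j, 0 ≤ μ i j)
    (hrow : ∀ i, ∑ j, μ i j = ξ i) (hcol : ∀ j, ∑ i, μ i j = ζ j)
    (t : ℝ) (ht : 0 < t) (l : Fin n) :
    |frechetVec Δ t ξ l - frechetVec Δ t ζ l| ≤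
      4 * Real.sqrt (((exp (-((2 * t) • Δ))).trace - 1) / (2 * Real.exp 1 * t)) *
        ∑ i, ∑ j, commuteTimeDist φ lam i j * μ i j := by
  have htr : (exp (-((2 * t) • Δ))).trace - 1
      = ∑ k ∈ Finset.univ.filter (fun k => k ≠ (0 : Fin n)),
          Real.exp (-(t * lam k)) ^ 2 := by
    rw [aux_trace_exp Δ φ lam horth heig (2 * t),
      ← Finset.sum_filter_add_sum_filter_not Finset.univ (fun k => k ≠ (0 : Fin n))]
    have hnot : Finset.univ.filter (fun k => ¬ k ≠ (0 : Fin n)) = {(0 : Fin n)} := by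
      ext k; simp
    rw [hnot, Finset.sum_singleton, h0]
    simp only [mul_zero, neg_zero, Real.exp_zero, add_sub_cancel_right]
    refine Finset.sum_congr rfl fun k _ => ?_
    rw [sq, ← Real.exp_add]
    congr 1
    ring
  have hdiff : frechetVec Δ t ξ l - frechetVec Δ t ζ l
      = ∑ i, ∑ j, (netDiffSq Δ t l i - netDiffSq Δ t l j) * μ i j := by
    rw [frechetVec, frechetVec]
    have e1 : ∑ i, netDiffSq Δ t l i * ξ i = ∑ i, ∑ j, netDiffSq Δ t l i * μ i j :=
      Finset.sum_congr rfl fun i _ => by rw [← hrow i, Finset.mul_sum]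
    have e2 : ∑ j, netDiffSq Δ t l j * ζ j = ∑ i, ∑ j, netDiffSq Δ t l j * μ i j := by
      calc ∑ j, netDiffSq Δ t l j * ζ j = ∑ j, ∑ i, netDiffSq Δ t l j * μ i j :=
            Finset.sum_congr rfl fun j _ => by rw [← hcol j, Finset.mul_sum]
        _ = ∑ i, ∑ j, netDiffSq Δ t l j * μ i j := Finset.sum_comm
    rw [e1, e2, ← Finset.sum_sub_distrib]
    refine Finset.sum_congr rfl fun i _ => ?_
    rw [← Finset.sum_sub_distrib]
    exact Finset.sum_congr rfl fun j _ => by ring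
  rw [htr, hdiff]
  calc |∑ i, ∑ j, (netDiffSq Δ t l i - netDiffSq Δ t l j) * μ i j|
      ≤ ∑ i, ∑ j, |(netDiffSq Δ t l i - netDiffSq Δ t l j) * μ i j| := by
        refine le_trans (Finset.abs_sum_le_sum_abs _ _) ?_
        exact Finset.sum_le_sum fun i _ => Finset.abs_sum_le_sum_abs _ _
    _ ≤ ∑ i, ∑ j, (4 * Real.sqrt ((∑ k ∈ Finset.univ.filter (fun k => k ≠ (0 : Fin n)),
            Real.exp (-(t * lam k)) ^ 2) / (2 * Real.exp 1 * t)) *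
          commuteTimeDist φ lam i j) * μ i j := by
        refine Finset.sum_le_sum fun i _ => Finset.sum_le_sum fun j _ => ?_
        rw [abs_mul, abs_of_nonneg (hμ i j)]
        exact mul_le_mul_of_nonneg_right
          (aux_lipschitz Δ φ lam horth heig h0 hpos hconst t ht l i j) (hμ i j)
    _ = 4 * Real.sqrt ((∑ k ∈ Finset.univ.filter (fun k => k ≠ (0 : Fin n)),
            Real.exp (-(t * lam k)) ^ 2) / (2 * Real.exp 1 * t)) *
          ∑ i, ∑ j, commuteTimeDist φ lam i j * μ i j := by
        rw [Finset.mul_sum]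
        refine Finset.sum_congr rfl fun i _ => ?_
        rw [Finset.mul_sum]
        exact Finset.sum_congr rfl fun j _ => by ring
end
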